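/- arXiv:2211.14137 — 5 statements merged into one kernel-verified Lean document; each statement's English description precedes it below -/
import Mathlib

section
/- Let n ≥ 1, let σ ∈ E₊ and let c be a real number. Then the endomorphism P(σ) − c·(σ⊗σ) of E is invertible if and only if c ≠ 1/n, and in that case its inverse is P(σ⁻¹) + (c/(1−nc))·(σ⁻¹⊗σ⁻¹). -/
open MeasureTheory Matrix Real

noncomputable section

/-- Square real matrices of size `n`. -/
abbrev Mat (n : ℕ) : Type := Matrix (Fin n) (Fin n) ℝ

/-- The submodule of symmetric `n × n` real matrices. -/
def symSubmodule (n : ℕ) : Submodule ℝ (Mat n) where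
  carrier := {A | A.IsSymm}
  add_mem' := fun {a b} (ha : aᵀ = a) (hb : bᵀ = b) => by
    show (a + b)ᵀ = a + b
    rw [Matrix.transpose_add, ha, hb]
  zero_mem' := Matrix.isSymm_zero
  smul_mem' := fun c a (ha : aᵀ = a) => by
    show (c • a)ᵀ = c • a
    rw [Matrix.transpose_smul, ha]

/-- The space `E` of symmetric `n × n` real matrices. -/
abbrev SymMat (n : ℕ) : Type := ↥(symSubmodule n)

lemma symMat_isSymm {n : ℕ} (u : SymMat n) : (u : Mat n).IsSymm := u.2

/-- The endomorphism `P(a) : v ↦ a v a` of the space `E` of symmetric matrices. -/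
def Pmap {n : ℕ} (a : SymMat n) : Module.End ℝ (SymMat n) where
  toFun v := ⟨(a : Mat n) * (v : Mat n) * (a : Mat n), by
    show ((a : Mat n) * (v : Mat n) * (a : Mat n))ᵀ = (a : Mat n) * (v : Mat n) * (a : Mat n)
    have ha : (a : Mat n)ᵀ = (a : Mat n) := a.2
    have hv : (v : Mat n)ᵀ = (v : Mat n) := v.2
    rw [Matrix.transpose_mul, Matrix.transpose_mul, ha, hv, ← Matrix.mul_assoc]⟩
  map_add' u v := by
    apply Subtype.ext
    simp [Matrix.mul_add, Matrix.add_mul]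
  map_smul' c v := by
    apply Subtype.ext
    simp [Matrix.mul_smul, Matrix.smul_mul]

/-- The endomorphism `a ⊗ a : v ↦ tr (a v) • a` of the space `E` of symmetric matrices. -/
def tensMap {n : ℕ} (a : SymMat n) : Module.End ℝ (SymMat n) where
  toFun v := ((a : Mat n) * (v : Mat n)).trace • a
  map_add' u v := by
    simp [Matrix.mul_add, add_smul]
  map_smul' c v := by
    simp [Matrix.mul_smul, smul_smul]

/-- The inverse of a symmetric matrix, as a symmetric matrix. -/
def symInv {n : ℕ} (a : SymMat n) : SymMat n :=
  ⟨(a : Mat n)⁻¹, by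
    show ((a : Mat n)⁻¹)ᵀ = (a : Mat n)⁻¹
    have ha : (a : Mat n)ᵀ = (a : Mat n) := a.2
    rw [Matrix.transpose_nonsing_inv, ha]⟩

lemma key {n : ℕ} (a b : SymMat n)
    (h1 : (a : Mat n) * (b : Mat n) = 1) (h2 : (b : Mat n) * (a : Mat n) = 1)
    (c d : ℝ) (hcd : c + d + c * d * n = 0) :
    (Pmap a + c • tensMap a) * (Pmap b + d • tensMap b) = 1 := by
  apply LinearMap.ext; intro v
  apply Subtype.ext
  have htr : ((a : Mat n) * ((b : Mat n) * (v : Mat n) * (b : Mat n))).trace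
      = ((b : Mat n) * (v : Mat n)).trace := by
    rw [← Matrix.mul_assoc, ← Matrix.mul_assoc, h1, Matrix.one_mul, Matrix.trace_mul_comm]
  have htrn : ((a : Mat n) * (b : Mat n)).trace = (n : ℝ) := by
    rw [h1, Matrix.trace_one]; simp
  simp only [Module.End.mul_apply, LinearMap.add_apply, LinearMap.smul_apply,
    Module.End.one_apply, Pmap, tensMap, LinearMap.coe_mk, AddHom.coe_mk,
    Submodule.coe_add, Submodule.coe_smul, SetLike.val_smul]
  simp only [Matrix.mul_add, Matrix.add_mul, Matrix.mul_smul, Matrix.smul_mul,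
    Matrix.trace_add, Matrix.trace_smul, smul_smul, smul_eq_mul, htr, htrn]
  have e1 : (a : Mat n) * ((b : Mat n) * (v : Mat n) * (b : Mat n)) * (a : Mat n)
      = (v : Mat n) := by
    rw [← Matrix.mul_assoc, ← Matrix.mul_assoc, h1, Matrix.one_mul, Matrix.mul_assoc, h2,
      Matrix.mul_one]
  have e2 : (a : Mat n) * (b : Mat n) * (a : Mat n) = (a : Mat n) := by
    rw [h1, Matrix.one_mul]
  rw [e1, e2, add_assoc, ← add_smul]
  have h0 : d * ((b : Mat n) * (v : Mat n)).trace +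
      c * (((b : Mat n) * (v : Mat n)).trace + d * ((b : Mat n) * (v : Mat n)).trace * (n : ℝ))
      = (c + d + c * d * (n : ℝ)) * ((b : Mat n) * (v : Mat n)).trace := by ring
  rw [h0, hcd, zero_mul, zero_smul, add_zero]

/-- Lemma 3.2, part 1: `P(σ) - c σ ⊗ σ` is invertible iff `c ≠ 1/n`, and in that case its
inverse is `P(σ⁻¹) + (c/(1-nc)) σ⁻¹ ⊗ σ⁻¹`. -/
theorem stmt_10 (n : ℕ) (hn : 1 ≤ n) (σ : SymMat n) (hσ : (σ : Mat n).PosDef) (c : ℝ) :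
    (IsUnit (Pmap σ - c • tensMap σ) ↔ c ≠ 1 / (n : ℝ)) ∧
      (c ≠ 1 / (n : ℝ) →
        (Pmap σ - c • tensMap σ) *
            (Pmap (symInv σ) + (c / (1 - (n : ℝ) * c)) • tensMap (symInv σ)) = 1 ∧
          (Pmap (symInv σ) + (c / (1 - (n : ℝ) * c)) • tensMap (symInv σ)) *
            (Pmap σ - c • tensMap σ) = 1) := by
  have hn0 : (n : ℝ) ≠ 0 := Nat.cast_ne_zero.mpr (by omega)
  have hdet : IsUnit (σ : Mat n).det := isUnit_iff_ne_zero.mpr hσ.det_pos.ne'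
  have h1 : (σ : Mat n) * (symInv σ : Mat n) = 1 := Matrix.mul_nonsing_inv _ hdet
  have h2 : (symInv σ : Mat n) * (σ : Mat n) = 1 := Matrix.nonsing_inv_mul _ hdet
  have hsub : Pmap σ - c • tensMap σ = Pmap σ + (-c) • tensMap σ := by
    apply LinearMap.ext; intro v
    apply Subtype.ext
    simp only [LinearMap.sub_apply, LinearMap.add_apply, LinearMap.smul_apply,
      AddSubgroupClass.coe_sub, Submodule.coe_add, SetLike.val_smul, neg_smul,
      sub_eq_add_neg]
  have main : ∀ _ : c ≠ 1 / (n : ℝ),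
      (Pmap σ - c • tensMap σ) *
          (Pmap (symInv σ) + (c / (1 - (n : ℝ) * c)) • tensMap (symInv σ)) = 1 ∧
        (Pmap (symInv σ) + (c / (1 - (n : ℝ) * c)) • tensMap (symInv σ)) *
          (Pmap σ - c • tensMap σ) = 1 := by
    intro hc
    have hden : 1 - (n : ℝ) * c ≠ 0 := by
      intro h
      apply hc
      field_simp
      linarith
    have hcd1 : (-c) + c / (1 - (n : ℝ) * c) + (-c) * (c / (1 - (n : ℝ) * c)) * n = 0 := by
      linear_combination div_mul_cancel₀ c hden
    have hcd2 : c / (1 - (n : ℝ) * c) + (-c) + (c / (1 - (n : ℝ) * c)) * (-c) * n = 0 := by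
      linear_combination div_mul_cancel₀ c hden
    rw [hsub]
    exact ⟨key σ (symInv σ) h1 h2 (-c) _ hcd1, key (symInv σ) σ h2 h1 _ (-c) hcd2⟩
  refine ⟨⟨?_, fun hc => ?_⟩, main⟩
  · intro hu
    intro hc
    have hker : (Pmap σ - c • tensMap σ) (symInv σ) = 0 := by
      apply Subtype.ext
      simp only [LinearMap.sub_apply, LinearMap.smul_apply, Pmap, tensMap,
        LinearMap.coe_mk, AddHom.coe_mk, AddSubgroupClass.coe_sub, SetLike.val_smul,
        ZeroMemClass.coe_zero]
      rw [h1, Matrix.one_mul, Matrix.trace_one]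
      simp only [Finset.card_univ, Fintype.card_fin, smul_smul, smul_eq_mul]
      rw [hc]
      rw [one_div, inv_mul_cancel₀ hn0, one_smul, sub_self]
    have hne : symInv σ ≠ 0 := by
      intro h0
      have : (symInv σ : Mat n) * (σ : Mat n) = 0 := by
        rw [h0]; simp
      rw [h2] at this
      have := congrFun (congrFun this ⟨0, hn⟩) ⟨0, hn⟩
      simp [Matrix.one_apply] at this
    apply hne
    obtain ⟨u, hu'⟩ := hu
    have hinv : (↑u⁻¹ : Module.End ℝ (SymMat n)) * (Pmap σ - c • tensMap σ) = 1 := by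
      rw [← hu']; exact u.inv_mul
    calc symInv σ
        = ((↑u⁻¹ : Module.End ℝ (SymMat n)) * (Pmap σ - c • tensMap σ)) (symInv σ) := by
          rw [hinv]; rfl
      _ = (↑u⁻¹ : Module.End ℝ (SymMat n)) ((Pmap σ - c • tensMap σ) (symInv σ)) := rfl
      _ = 0 := by rw [hker]; exact map_zero _
  · exact ⟨⟨_, _, (main hc).1, (main hc).2⟩, rfl⟩
end
end

section
/- Let n ≥ 1, let σ ∈ E₊ and let c be a real number. Then the symmetric endomorphism P(σ) − c·(σ⊗σ) of E is positive definite (i.e. ⟨(P(σ) − c·σ⊗σ)(v), v⟩ > 0 for all nonzero v ∈ E) if and only if c < 1/n. -/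
open MeasureTheory Matrix Real

noncomputable section

lemma core_ineq {n : ℕ} (hn : 1 ≤ n) (c : ℝ) (hc : c < 1 / n) (w : Mat n)
    (hw : wᵀ = w) (hw0 : w ≠ 0) : c * (w.trace)^2 < (w * w).trace := by
  have htr : (w * w).trace = ∑ i, ∑ j, (w i j)^2 := by
    simp only [Matrix.trace, Matrix.diag, Matrix.mul_apply]
    refine Finset.sum_congr rfl fun i _ => Finset.sum_congr rfl fun j _ => ?_
    have hji : w j i = w i j := by
      have := congrFun (congrFun hw i) j
      simpa [Matrix.transpose_apply] using this
    rw [hji, sq]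
  have hA : 0 < (w * w).trace := by
    rw [htr]
    have hne : ∃ i j, w i j ≠ 0 := by
      by_contra h
      push_neg at h
      exact hw0 (by ext i j; exact h i j)
    obtain ⟨i, j, hij⟩ := hne
    have : 0 < ∑ j, (w i j)^2 :=
      Finset.sum_pos' (fun k _ => sq_nonneg _) ⟨j, Finset.mem_univ j, by positivity⟩
    refine Finset.sum_pos' (fun k _ => Finset.sum_nonneg fun l _ => sq_nonneg _)
      ⟨i, Finset.mem_univ i, this⟩
  have hCS : (w.trace)^2 ≤ n * (w * w).trace := by
    have h1 : (w.trace)^2 ≤ (n : ℝ) * ∑ i, (w i i)^2 := by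
      have := sq_sum_le_card_mul_sum_sq (s := (Finset.univ : Finset (Fin n))) (f := fun i => w i i)
      simpa [Matrix.trace] using this
    have h2 : ∑ i, (w i i)^2 ≤ (w * w).trace := by
      rw [htr]
      exact Finset.sum_le_sum fun i _ =>
        Finset.single_le_sum (fun j _ => sq_nonneg (w i j)) (Finset.mem_univ i)
    nlinarith
  rcases le_or_gt c 0 with h | h
  · nlinarith [sq_nonneg w.trace]
  · have hcn : c * n < 1 := by
      rw [lt_div_iff₀ (by exact_mod_cast Nat.pos_of_ne_zero (by omega))] at hc
      linarith
    nlinarith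
lemma expand_trace {n : ℕ} (σ v : SymMat n) (c : ℝ) :
    ((((Pmap σ - c • tensMap σ) v : SymMat n) : Mat n) * (v : Mat n)).trace
      = ((σ : Mat n) * (v : Mat n) * (σ : Mat n) * (v : Mat n)).trace
        - c * (((σ : Mat n) * (v : Mat n)).trace)^2 := by
  simp only [LinearMap.sub_apply, LinearMap.smul_apply, Pmap, tensMap, LinearMap.coe_mk,
    AddHom.coe_mk, AddSubgroupClass.coe_sub, SetLike.val_smul, Matrix.sub_mul, Matrix.smul_mul,
    Matrix.trace_sub, Matrix.trace_smul, smul_eq_mul, smul_smul]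
  ring


/-- Lemma 3.2, part 2: `P(σ) - c σ ⊗ σ` is positive definite for the inner product
`⟨u, v⟩ = tr (u v)` iff `c < 1/n`. -/
theorem stmt_11 (n : ℕ) (hn : 1 ≤ n) (σ : SymMat n) (hσ : (σ : Mat n).PosDef) (c : ℝ) :
    (∀ v : SymMat n, v ≠ 0 →
        0 < ((((Pmap σ - c • tensMap σ) v : SymMat n) : Mat n) * (v : Mat n)).trace) ↔
      c < 1 / (n : ℝ) := by
  have hdet : (σ : Mat n).det ≠ 0 := ne_of_gt hσ.det_pos
  have hinv : (σ : Mat n) * (σ : Mat n)⁻¹ = 1 := Matrix.mul_nonsing_inv _ (Ne.isUnit hdet)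
  have hnpos : (0 : ℝ) < n := by exact_mod_cast Nat.pos_of_ne_zero (by omega)
  constructor
  · intro h
    have hne : symInv σ ≠ 0 := by
      intro h0
      have h1' : (σ : Mat n) * (σ : Mat n)⁻¹ = 0 := by
        have h2' : ((symInv σ : SymMat n) : Mat n) = 0 := by rw [h0]; rfl
        rw [show ((symInv σ : SymMat n) : Mat n) = (σ : Mat n)⁻¹ from rfl] at h2'
        rw [h2', Matrix.mul_zero]
      rw [hinv] at h1'
      have h1 : (1 : Mat n).trace = 0 := by rw [h1']; simp
      rw [Matrix.trace_one] at h1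
      simp at h1
      omega
    have key := h (symInv σ) hne
    rw [expand_trace] at key
    have hcoe : ((symInv σ : SymMat n) : Mat n) = (σ : Mat n)⁻¹ := rfl
    rw [hcoe] at key
    rw [show (σ : Mat n) * (σ : Mat n)⁻¹ * (σ : Mat n) * (σ : Mat n)⁻¹ = 1 by
        rw [hinv, Matrix.one_mul, hinv], hinv, Matrix.trace_one] at key
    simp only [Fintype.card_fin] at key
    rw [lt_div_iff₀ hnpos]
    nlinarith
  · intro hc v hv
    rw [expand_trace]
    obtain ⟨s, hs, hssym⟩ : ∃ s : Mat n, s * s = (σ : Mat n) ∧ sᵀ = s := by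
      open scoped MatrixOrder in
      refine ⟨CFC.sqrt (σ : Mat n), CFC.sqrt_mul_sqrt_self _ hσ.posSemidef.nonneg, ?_⟩
      open scoped MatrixOrder in
      have h := (CFC.sqrt_nonneg (σ : Mat n)).posSemidef.1
      rw [Matrix.IsHermitian, Matrix.conjTranspose_eq_transpose_of_trivial] at h
      exact h
    have hsdet : s.det ≠ 0 := by
      intro h0
      have : (σ : Mat n).det = 0 := by rw [← hs, Matrix.det_mul, h0, mul_zero]
      exact hdet this
    set w := s * (v : Mat n) * s with hw_def
    have hw : wᵀ = w := by
      rw [hw_def, Matrix.transpose_mul, Matrix.transpose_mul, hssym, v.2, Matrix.mul_assoc]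
    have hw0 : w ≠ 0 := by
      intro h0
      apply hv
      apply Subtype.ext
      have hv0 : s⁻¹ * w * s⁻¹ = (v : Mat n) := by
        rw [hw_def, Matrix.mul_assoc, Matrix.mul_assoc, Matrix.mul_nonsing_inv _ (Ne.isUnit hsdet),
          Matrix.mul_one, ← Matrix.mul_assoc, Matrix.nonsing_inv_mul _ (Ne.isUnit hsdet),
          Matrix.one_mul]
      rw [← hv0, h0, Matrix.mul_zero, Matrix.zero_mul]
      rfl
    have hmm1 : (w * w).trace = ((σ : Mat n) * (v : Mat n) * (σ : Mat n) * (v : Mat n)).trace := by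
      calc (w * w).trace
          = (s * ((v : Mat n) * (s * (s * ((v : Mat n) * s))))).trace := by
            rw [hw_def]; congr 1; simp only [mul_assoc]
        _ = (((v : Mat n) * (s * (s * ((v : Mat n) * s)))) * s).trace :=
            Matrix.trace_mul_comm _ _
        _ = ((v : Mat n) * ((σ : Mat n) * ((v : Mat n) * (σ : Mat n)))).trace := by
            rw [← hs]; congr 1; simp only [mul_assoc]
        _ = (((σ : Mat n) * ((v : Mat n) * (σ : Mat n))) * (v : Mat n)).trace :=
            Matrix.trace_mul_comm _ _
        _ = ((σ : Mat n) * (v : Mat n) * (σ : Mat n) * (v : Mat n)).trace := by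
            congr 1; simp only [mul_assoc]
    have hmm2 : ((σ : Mat n) * (v : Mat n)).trace = w.trace := by
      calc ((σ : Mat n) * (v : Mat n)).trace
          = (s * (s * (v : Mat n))).trace := by rw [← hs]; congr 1; simp only [mul_assoc]
        _ = ((s * (v : Mat n)) * s).trace := (Matrix.trace_mul_comm _ _).symm
        _ = w.trace := by rw [hw_def]
    rw [hmm2, ← hmm1]
    have := core_ineq hn c hc w hw hw0
    linarith


end
end

section
/- Let n ≥ 1, let σ ∈ E₊ and let c be a real number. Then the determinant of the endomorphism P(σ) − c·(σ⊗σ) of the n(n+1)/2-dimensional space E equals (det σ)^{n+1} · (1 − cn). In particular det P(σ) = (det σ)^{n+1}. -/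
open MeasureTheory Matrix Real

noncomputable section

section Aux
variable {n : ℕ}

/-- `Q(g) : v ↦ g v gᵀ` as an endomorphism of symmetric matrices. -/
def Qmap (g : Mat n) : Module.End ℝ (SymMat n) where
  toFun v := ⟨g * (v : Mat n) * gᵀ, by
    show (g * (v : Mat n) * gᵀ)ᵀ = g * (v : Mat n) * gᵀ
    rw [Matrix.transpose_mul, Matrix.transpose_mul, Matrix.transpose_transpose, v.2.eq,
      Matrix.mul_assoc]⟩
  map_add' u v := Subtype.ext (by simp [Matrix.mul_add, Matrix.add_mul])
  map_smul' c v := Subtype.ext (by simp [Matrix.mul_smul, Matrix.smul_mul])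

lemma Qmap_coe (g : Mat n) (v : SymMat n) : ((Qmap g v : SymMat n) : Mat n) = g * v * gᵀ := rfl

lemma Qmap_mul (g h : Mat n) : Qmap (g * h) = Qmap g * Qmap h := by
  apply LinearMap.ext; intro v
  apply Subtype.ext
  show (g * h) * (v : Mat n) * (g * h)ᵀ = g * ((h * v * hᵀ)) * gᵀ
  rw [Matrix.transpose_mul]
  simp [Matrix.mul_assoc]

lemma Qmap_one : Qmap (1 : Mat n) = 1 := by
  apply LinearMap.ext; intro v
  apply Subtype.ext
  show (1 : Mat n) * (v : Mat n) * (1 : Mat n)ᵀ = v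
  simp

end Aux
section Aux2
variable {n : ℕ}

/-- Conjugation `σ ↦ uᵀ σ u` on symmetric matrices. -/
def conjSym (u : Mat n) (σ : SymMat n) : SymMat n :=
  ⟨uᵀ * (σ : Mat n) * u, by
    show (uᵀ * (σ : Mat n) * u)ᵀ = uᵀ * (σ : Mat n) * u
    rw [Matrix.transpose_mul, Matrix.transpose_mul, Matrix.transpose_transpose, σ.2.eq,
      Matrix.mul_assoc]⟩

lemma conj_eq (σ : SymMat n) (c : ℝ) (u : Mat n) :
    Qmap uᵀ * (Pmap σ - c • tensMap σ) * Qmap u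
      = Pmap (conjSym u σ) - c • tensMap (conjSym u σ) := by
  apply LinearMap.ext; intro v
  apply Subtype.ext
  have htr : ((σ : Mat n) * (u * (v : Mat n) * uᵀ)).trace
      = ((uᵀ * (σ : Mat n) * u) * (v : Mat n)).trace := by
    rw [show (σ : Mat n) * (u * (v : Mat n) * uᵀ) = ((σ : Mat n) * u * (v : Mat n)) * uᵀ by
      simp [Matrix.mul_assoc], Matrix.trace_mul_comm]
    simp [Matrix.mul_assoc]
  show uᵀ * (((Pmap σ - c • tensMap σ) (Qmap u v) : SymMat n) : Mat n) * (uᵀ)ᵀ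
      = ((Pmap (conjSym u σ) - c • tensMap (conjSym u σ)) v : Mat n)
  have hcoe : (((Pmap σ - c • tensMap σ) (Qmap u v) : SymMat n) : Mat n)
      = (σ : Mat n) * (u * (v : Mat n) * uᵀ) * (σ : Mat n)
        - c • (((σ : Mat n) * (u * (v : Mat n) * uᵀ)).trace • (σ : Mat n)) := by
    simp [Pmap, tensMap, Qmap]
  rw [hcoe, Matrix.transpose_transpose]
  have hrhs : ((Pmap (conjSym u σ) - c • tensMap (conjSym u σ)) v : Mat n)
      = (uᵀ * (σ : Mat n) * u) * (v : Mat n) * (uᵀ * (σ : Mat n) * u)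
        - c • ((((uᵀ * (σ : Mat n) * u)) * (v : Mat n)).trace • (uᵀ * (σ : Mat n) * u)) := by
    simp [Pmap, tensMap, conjSym]
  rw [hrhs, ← htr]
  rw [Matrix.mul_sub, Matrix.sub_mul]
  congr 1
  · simp [Matrix.mul_assoc]
  · simp [Matrix.mul_smul, Matrix.smul_mul, Matrix.mul_assoc]

lemma det_conj (σ : SymMat n) (c : ℝ) (u : Mat n) (hu' : uᵀ * u = 1) :
    LinearMap.det (Pmap σ - c • tensMap σ : Module.End ℝ (SymMat n))
      = LinearMap.det (Pmap (conjSym u σ) - c • tensMap (conjSym u σ)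
          : Module.End ℝ (SymMat n)) := by
  rw [← conj_eq σ c u]
  have h1 : LinearMap.det (Qmap uᵀ : Module.End ℝ (SymMat n)) * LinearMap.det (Qmap u : Module.End ℝ (SymMat n)) = 1 := by
    rw [← LinearMap.det_comp, ← Module.End.mul_eq_comp, ← Qmap_mul, hu', Qmap_one]
    exact LinearMap.det_id
  rw [Module.End.mul_eq_comp, Module.End.mul_eq_comp, LinearMap.det_comp, LinearMap.det_comp]
  linear_combination (-(LinearMap.det (Pmap σ - c • tensMap σ : Module.End ℝ (SymMat n)))) * h1

end Aux2
section Basis3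
variable {n : ℕ}

/-- Index set for the standard basis of symmetric matrices. -/
abbrev SymIdx (n : ℕ) := {p : Fin n × Fin n // p.1 ≤ p.2}

/-- Coordinates of a symmetric matrix. -/
def symCoordEquiv (n : ℕ) : SymMat n ≃ₗ[ℝ] (SymIdx n → ℝ) where
  toFun u p := (u : Mat n) p.1.1 p.1.2
  map_add' u v := rfl
  map_smul' c u := rfl
  invFun f := ⟨Matrix.of (fun k l =>
      if h : k ≤ l then f ⟨(k, l), h⟩ else f ⟨(l, k), le_of_not_ge h⟩), by
    apply Matrix.IsSymm.ext
    intro i j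
    show (if h : j ≤ i then f ⟨(j, i), h⟩ else f ⟨(i, j), le_of_not_ge h⟩)
        = (if h : i ≤ j then f ⟨(i, j), h⟩ else f ⟨(j, i), le_of_not_ge h⟩)
    by_cases h1 : i ≤ j <;> by_cases h2 : j ≤ i
    · have : i = j := le_antisymm h1 h2
      subst this; simp
    · simp [h1, h2]
    · simp [h1, h2]
    · exact absurd (le_total i j) (by simp [h1, h2])⟩
  left_inv u := by
    apply Subtype.ext
    ext i j
    show (if h : i ≤ j then (u : Mat n) i j else (u : Mat n) j i) = (u : Mat n) i j
    by_cases h : i ≤ j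
    · simp [h]
    · simp [h, u.2.apply]
  right_inv f := by
    funext p
    obtain ⟨⟨i, j⟩, hij⟩ := p
    show (if h : i ≤ j then f ⟨(i, j), h⟩ else f ⟨(j, i), le_of_not_ge h⟩) = f ⟨(i, j), hij⟩
    simp [hij]

/-- The standard basis of symmetric matrices. -/
def symBasis (n : ℕ) : Module.Basis (SymIdx n) ℝ (SymMat n) := Module.Basis.ofEquivFun (symCoordEquiv n)

lemma symCoordEquiv_symm_coe (f : SymIdx n → ℝ) (k l : Fin n) :
    (((symCoordEquiv n).symm f : SymMat n) : Mat n) k l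
      = if h : k ≤ l then f ⟨(k, l), h⟩ else f ⟨(l, k), le_of_not_ge h⟩ := rfl

lemma basisVec_entry (q : SymIdx n) (k l : Fin n) :
    ((symBasis n q : SymMat n) : Mat n) k l
      = if (k = q.1.1 ∧ l = q.1.2) ∨ (k = q.1.2 ∧ l = q.1.1) then 1 else 0 := by
  have hb : symBasis n q = (symCoordEquiv n).symm (Pi.single q 1) := by
    rw [symBasis, Module.Basis.coe_ofEquivFun]
  obtain ⟨⟨i, j⟩, hij⟩ := q
  rw [hb, symCoordEquiv_symm_coe]
  by_cases h : k ≤ l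
  · rw [dif_pos h, Pi.single_apply]
    simp only [Subtype.mk.injEq, Prod.mk.injEq]
    by_cases h1 : k = i ∧ l = j
    · simp [h1]
    · rw [if_neg h1, if_neg]
      rintro (h2 | ⟨hk, hl⟩)
      · exact h1 h2
      · have hji : j ≤ i := hk ▸ hl ▸ h
        have hij' : i = j := le_antisymm hij hji
        exact h1 ⟨hk.trans hij'.symm, hl.trans hij'⟩
  · rw [dif_neg h, Pi.single_apply]
    simp only [Subtype.mk.injEq, Prod.mk.injEq]
    by_cases h2 : l = i ∧ k = j
    · rw [if_pos h2, if_pos (Or.inr ⟨h2.2, h2.1⟩)]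
    · rw [if_neg h2, if_neg]
      rintro (⟨hk, hl⟩ | ⟨hk, hl⟩)
      · exact h (hk ▸ hl ▸ hij)
      · exact h2 ⟨hl, hk⟩

end Basis3
section Diag4
variable {n : ℕ}

/-- A diagonal matrix as a symmetric matrix. -/
def diagSym (d : Fin n → ℝ) : SymMat n := ⟨Matrix.diagonal d, Matrix.isSymm_diagonal d⟩

lemma trace_diag_basisVec (d : Fin n → ℝ) (q : SymIdx n) :
    (Matrix.diagonal d * ((symBasis n q : SymMat n) : Mat n)).trace
      = if q.1.1 = q.1.2 then d q.1.1 else 0 := by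
  obtain ⟨⟨i, j⟩, hij⟩ := q
  rw [Matrix.trace]
  simp only [Matrix.diag, Matrix.diagonal_mul, basisVec_entry]
  by_cases hd : i = j
  · subst hd
    simp
  · rw [if_neg hd]
    apply Finset.sum_eq_zero
    intro k _
    rw [if_neg, mul_zero]
    rintro (⟨hk, hl⟩ | ⟨hk, hl⟩)
    · exact hd (hk.symm.trans hl)
    · exact hd (hl.symm.trans hk)

lemma entry_formula (d : Fin n → ℝ) (c : ℝ) (p q : SymIdx n) :
    LinearMap.toMatrix (symBasis n) (symBasis n)
        (Pmap (diagSym d) - c • tensMap (diagSym d) : Module.End ℝ (SymMat n)) p q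
      = (if p = q then d p.1.1 * d p.1.2 else 0)
        - c * (if q.1.1 = q.1.2 then d q.1.1 else 0)
            * (if p.1.1 = p.1.2 then d p.1.1 else 0) := by
  rw [LinearMap.toMatrix_apply]
  rw [symBasis, Module.Basis.ofEquivFun_repr_apply]
  show ((((Pmap (diagSym d) - c • tensMap (diagSym d)) (symBasis n q)) : SymMat n) : Mat n)
      p.1.1 p.1.2 = _
  have hcoe : ((((Pmap (diagSym d) - c • tensMap (diagSym d)) (symBasis n q)) : SymMat n) : Mat n)
      = Matrix.diagonal d * ((symBasis n q : SymMat n) : Mat n) * Matrix.diagonal d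
        - c • ((Matrix.diagonal d * ((symBasis n q : SymMat n) : Mat n)).trace
            • Matrix.diagonal d) := by
    simp [Pmap, tensMap, diagSym]
  rw [hcoe]
  rw [Matrix.sub_apply, Matrix.smul_apply, Matrix.smul_apply, Matrix.mul_diagonal,
    Matrix.diagonal_mul, trace_diag_basisVec, basisVec_entry]
  rw [Matrix.diagonal_apply]
  obtain ⟨⟨a, b⟩, hab⟩ := p
  obtain ⟨⟨i, j⟩, hij⟩ := q
  simp only [smul_eq_mul]
  congr 1
  · -- first term
    by_cases h1 : (⟨(a, b), hab⟩ : SymIdx n) = ⟨(i, j), hij⟩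
    · obtain ⟨ha, hb⟩ : a = i ∧ b = j := by
        simpa [Subtype.ext_iff, Prod.ext_iff] using h1
      subst ha; subst hb
      simp
    · rw [if_neg h1, if_neg, mul_zero, zero_mul]
      rintro (⟨ha, hb⟩ | ⟨ha, hb⟩)
      · exact h1 (by subst ha; subst hb; rfl)
      · have : i = j := le_antisymm hij (ha ▸ hb ▸ hab)
        subst this
        exact h1 (by subst ha; subst hb; rfl)
  · -- second term
    by_cases h2 : a = b <;> by_cases h3 : i = j <;> simp [h2, h3] <;> ring
end Diag4
section Split5
variable {n : ℕ}

abbrev StrIdx (n : ℕ) := {p : Fin n × Fin n // p.1 < p.2}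

/-- Splitting the index set into strictly-off-diagonal and diagonal indices. -/
def splitEquiv (n : ℕ) : SymIdx n ≃ (StrIdx n ⊕ Fin n) where
  toFun p := if h : p.1.1 < p.1.2 then Sum.inl ⟨p.1, h⟩ else Sum.inr p.1.1
  invFun x := x.elim (fun q => ⟨q.1, le_of_lt q.2⟩) (fun i => ⟨(i, i), le_refl i⟩)
  left_inv p := by
    obtain ⟨⟨i, j⟩, hij⟩ := p
    by_cases h : i < j
    · simp [h]
    · have hd : i = j := le_antisymm hij (not_lt.1 h)
      subst hd
      simp [h]
  right_inv x := by
    rcases x with q | i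
    · simp [q.2]
    · simp

/-- The matrix `B` of the diagonal block. -/
def Bmat (d : Fin n → ℝ) (c : ℝ) : Matrix (Fin n) (Fin n) ℝ :=
  Matrix.of fun k i => (if k = i then d k * d i else 0) - c * d i * d k

lemma submatrix_eq (d : Fin n → ℝ) (c : ℝ) :
    (LinearMap.toMatrix (symBasis n) (symBasis n)
        (Pmap (diagSym d) - c • tensMap (diagSym d) : Module.End ℝ (SymMat n))).submatrix
        (splitEquiv n).symm (splitEquiv n).symm
      = Matrix.fromBlocks (Matrix.diagonal (fun q : StrIdx n => d q.1.1 * d q.1.2)) 0 0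
          (Bmat d c) := by
  ext x y
  rcases x with q | k <;> rcases y with q' | i <;>
    simp only [Matrix.submatrix_apply, entry_formula, splitEquiv, Equiv.coe_fn_symm_mk,
      Sum.elim_inl, Sum.elim_inr, Matrix.fromBlocks_apply₁₁, Matrix.fromBlocks_apply₁₂,
      Matrix.fromBlocks_apply₂₁, Matrix.fromBlocks_apply₂₂, Matrix.zero_apply, Bmat,
      Matrix.of_apply, Matrix.diagonal_apply]
  · -- strict/strict
    simp only [Subtype.mk.injEq, Subtype.coe_inj]
    rw [if_neg (ne_of_lt q.2), mul_zero, sub_zero]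
  · -- strict/diagonal
    simp only [Subtype.mk.injEq, Prod.mk.injEq, if_true]
    rw [if_neg (ne_of_lt q.2), mul_zero, sub_zero, if_neg]
    intro hc
    exact ne_of_lt q.2 ((congrArg Prod.fst hc).trans (congrArg Prod.snd hc).symm)
  · -- diagonal/strict
    simp only [Subtype.mk.injEq, Prod.mk.injEq, if_true]
    rw [if_neg (ne_of_lt q'.2), mul_zero, zero_mul, sub_zero, if_neg]
    intro hc
    exact ne_of_lt q'.2 ((congrArg Prod.fst hc).symm.trans (congrArg Prod.snd hc))
  · -- diagonal/diagonal
    simp only [Subtype.mk.injEq, Prod.mk.injEq, and_self, if_true]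
    by_cases h : k = i <;> simp [h] <;> ring

lemma det_Bmat (d : Fin n → ℝ) (c : ℝ) :
    (Bmat d c).det = (∏ i, d i) ^ 2 * (1 - c * n) := by
  have hB : Bmat d c = Matrix.diagonal d
      * (1 + Matrix.replicateCol Unit (fun _ : Fin n => -c) * Matrix.replicateRow Unit (fun _ : Fin n => (1 : ℝ)))
      * Matrix.diagonal d := by
    ext k i
    rw [Matrix.mul_diagonal, Matrix.diagonal_mul]
    simp only [Matrix.add_apply, Matrix.one_apply, Bmat, Matrix.of_apply]
    rw [show ((Matrix.replicateCol Unit (fun _ : Fin n => -c) * Matrix.replicateRow Unit (fun _ : Fin n => (1 : ℝ)))) k i = -c by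
      simp [Matrix.mul_apply]]
    by_cases h : k = i
    · subst h; simp; ring
    · simp [h]; ring
  rw [hB, Matrix.det_mul, Matrix.det_mul, Matrix.det_one_add_replicateCol_mul_replicateRow, Matrix.det_diagonal]
  simp [dotProduct]
  ring

end Split5
section Prod6
variable {n : ℕ}

lemma prod_strict_sq (d : Fin n → ℝ) (hd : ∀ i, 0 < d i) :
    (∏ q : StrIdx n, (d q.1.1 * d q.1.2)) * (∏ i, d i) ^ 2 = (∏ i, d i) ^ (n + 1) := by
  set P : ℝ := ∏ i, d i with hP
  have hPpos : 0 < P := Finset.prod_pos (fun i _ => hd i)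
  set f : Fin n × Fin n → ℝ := fun p => d p.1 * d p.2 with hf
  set A : ℝ := ∏ q : StrIdx n, (d q.1.1 * d q.1.2) with hA
  have hApos : 0 < A := Finset.prod_pos (fun q _ => mul_pos (hd _) (hd _))
  have hAfilter : A = ∏ p ∈ Finset.univ.filter (fun p : Fin n × Fin n => p.1 < p.2), f p :=
    (Finset.prod_subtype _ (by simp) f).symm
  -- the product over all pairs
  have htot : ∏ p : Fin n × Fin n, f p = P ^ n * P ^ n := by
    rw [← Finset.univ_product_univ, Finset.prod_product]
    have h1 : ∀ i, (∏ j, (d i * d j)) = d i ^ n * P := by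
      intro i
      rw [Finset.prod_mul_distrib, Finset.prod_const, Finset.card_univ, Fintype.card_fin]
    calc (∏ i, ∏ j, f (i, j)) = ∏ i, (d i ^ n * P) := by
          apply Finset.prod_congr rfl; intro i _; exact h1 i
      _ = (∏ i, d i ^ n) * ∏ (_ : Fin n), P := Finset.prod_mul_distrib
      _ = P ^ n * P ^ n := by
          rw [Finset.prod_pow, Finset.prod_const, Finset.card_univ, Fintype.card_fin]
  -- the product over strictly lower pairs equals A
  have hswap : ∏ p ∈ Finset.univ.filter (fun p : Fin n × Fin n => p.2 < p.1), f p
      = ∏ p ∈ Finset.univ.filter (fun p : Fin n × Fin n => p.1 < p.2), f p := by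
    refine Finset.prod_bij' (fun p _ => (p.2, p.1)) (fun p _ => (p.2, p.1)) ?_ ?_ ?_ ?_ ?_
    · intro a ha; simp only [Finset.mem_filter, Finset.mem_univ, true_and] at ha ⊢; exact ha
    · intro a ha; simp only [Finset.mem_filter, Finset.mem_univ, true_and] at ha ⊢; exact ha
    · intro a _; simp
    · intro a _; simp
    · intro a _; exact mul_comm (d a.1) (d a.2)
  -- the product over the diagonal
  have hdiagset : (Finset.univ.filter (fun p : Fin n × Fin n => p.1 = p.2))
      = Finset.univ.image (fun i => (i, i)) := by
    ext p
    simp only [Finset.mem_filter, Finset.mem_univ, true_and, Finset.mem_image, Prod.ext_iff]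
    constructor
    · intro h; exact ⟨p.1, rfl, h⟩
    · rintro ⟨i, h1, h2⟩; rw [← h1, ← h2]
  have hdiag : ∏ p ∈ Finset.univ.filter (fun p : Fin n × Fin n => p.1 = p.2), f p = P ^ 2 := by
    rw [hdiagset, Finset.prod_image (by intro a _ b _ h; exact (Prod.ext_iff.1 h).1)]
    show (∏ i, (d i * d i)) = P ^ 2
    rw [Finset.prod_mul_distrib, ← hP, sq]
  -- splitting the full product
  have hsplit : A * (A * P ^ 2) = P ^ n * P ^ n := by
    have e1 := Finset.prod_filter_mul_prod_filter_not (Finset.univ : Finset (Fin n × Fin n))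
      (fun p => p.1 < p.2) f
    have e2 := Finset.prod_filter_mul_prod_filter_not
      (Finset.univ.filter (fun p : Fin n × Fin n => ¬ p.1 < p.2)) (fun p => p.2 < p.1) f
    have s1 : (Finset.univ.filter (fun p : Fin n × Fin n => ¬ p.1 < p.2)).filter
        (fun p => p.2 < p.1) = Finset.univ.filter (fun p : Fin n × Fin n => p.2 < p.1) := by
      rw [Finset.filter_filter]
      apply Finset.filter_congr; intro p _
      constructor
      · rintro ⟨_, h⟩; exact h
      · intro h; exact ⟨lt_asymm h, h⟩
    have s2 : (Finset.univ.filter (fun p : Fin n × Fin n => ¬ p.1 < p.2)).filter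
        (fun p => ¬ p.2 < p.1) = Finset.univ.filter (fun p : Fin n × Fin n => p.1 = p.2) := by
      rw [Finset.filter_filter]
      apply Finset.filter_congr; intro p _
      simp only [not_lt]
      constructor
      · rintro ⟨h1, h2⟩; exact le_antisymm h2 h1
      · intro h; exact ⟨le_of_eq h.symm, le_of_eq h⟩
    have e2' : A * P ^ 2
        = ∏ p ∈ Finset.univ.filter (fun p : Fin n × Fin n => ¬ p.1 < p.2), f p := by
      rw [← e2, s1, s2, hswap, ← hAfilter, hdiag]
    rw [e2', hAfilter, e1, htot]
  -- conclude
  have hsq : (A * P ^ 2) ^ 2 = (P ^ (n + 1)) ^ 2 := by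
    have : A * (A * P ^ 2) * P ^ 2 = P ^ n * P ^ n * P ^ 2 := by rw [hsplit]
    calc (A * P ^ 2) ^ 2 = A * (A * P ^ 2) * P ^ 2 := by ring
      _ = P ^ n * P ^ n * P ^ 2 := this
      _ = (P ^ (n + 1)) ^ 2 := by ring
  exact (sq_eq_sq₀ (by positivity) (by positivity)).1 hsq

lemma det_diag_case (d : Fin n → ℝ) (hd : ∀ i, 0 < d i) (c : ℝ) :
    LinearMap.det (Pmap (diagSym d) - c • tensMap (diagSym d) : Module.End ℝ (SymMat n))
      = (∏ i, d i) ^ (n + 1) * (1 - c * n) := by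
  rw [← LinearMap.det_toMatrix (symBasis n)]
  rw [← Matrix.det_submatrix_equiv_self (splitEquiv n).symm]
  rw [submatrix_eq, Matrix.det_fromBlocks_zero₂₁, Matrix.det_diagonal, det_Bmat]
  rw [← mul_assoc, prod_strict_sq d hd]

end Prod6
lemma stmt_main (n : ℕ) (σ : SymMat n) (hσ : (σ : Mat n).PosDef) (c : ℝ) :
    LinearMap.det (Pmap σ - c • tensMap σ : Module.End ℝ (SymMat n)) =
      (σ : Mat n).det ^ (n + 1) * (1 - c * n) := by
  have hherm : (σ : Mat n).IsHermitian := hσ.1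
  set d : Fin n → ℝ := hherm.eigenvalues with hd
  set U : Mat n := (Matrix.IsHermitian.eigenvectorUnitary hherm : Mat n) with hU
  have hUmem : U ∈ Matrix.unitaryGroup (Fin n) ℝ := (Matrix.IsHermitian.eigenvectorUnitary hherm).2
  have hstar : star U = Uᵀ := by
    rw [Matrix.star_eq_conjTranspose, Matrix.conjTranspose_eq_transpose_of_trivial]
  have huu : Uᵀ * U = 1 := by
    rw [← hstar]; exact (Matrix.mem_unitaryGroup_iff'.1 hUmem)
  have huu' : U * Uᵀ = 1 := by
    rw [← hstar]; exact (Matrix.mem_unitaryGroup_iff.1 hUmem)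
  have hspec : (σ : Mat n) = U * Matrix.diagonal d * Uᵀ := by
    have h1 := hherm.spectral_theorem
    rw [RCLike.ofReal_real_eq_id, Function.id_comp] at h1
    rw [← hstar]
    exact h1
  have hDval : (conjSym U σ : Mat n) = Matrix.diagonal d := by
    show Uᵀ * (σ : Mat n) * U = Matrix.diagonal d
    rw [hspec, show Uᵀ * (U * Matrix.diagonal d * Uᵀ) * U
      = (Uᵀ * U) * Matrix.diagonal d * (Uᵀ * U) by simp [Matrix.mul_assoc], huu]
    simp
  have hDeq : conjSym U σ = diagSym d := Subtype.ext hDval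
  have hdet : (σ : Mat n).det = ∏ i, d i := by
    simpa using hherm.det_eq_prod_eigenvalues
  rw [det_conj σ c U huu, hDeq, det_diag_case d (fun i => hσ.eigenvalues_pos i) c, hdet]


/-- Lemma 3.2, part 3: `det (P(σ) - c σ ⊗ σ) = (det σ)^{n+1} (1 - c n)`; in particular
`det P(σ) = (det σ)^{n+1}`. -/
theorem stmt_12 (n : ℕ) (hn : 1 ≤ n) (σ : SymMat n) (hσ : (σ : Mat n).PosDef) (c : ℝ) :
    LinearMap.det (Pmap σ - c • tensMap σ : Module.End ℝ (SymMat n)) =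
        (σ : Mat n).det ^ (n + 1) * (1 - c * n) ∧
      LinearMap.det (Pmap σ : Module.End ℝ (SymMat n)) = (σ : Mat n).det ^ (n + 1) := by
  refine ⟨stmt_main n σ hσ c, ?_⟩
  have h0 := stmt_main n σ hσ 0
  simp only [zero_smul, Nat.cast_id, mul_zero, zero_mul, mul_one, sub_zero] at h0
  rw [show (Pmap σ - 0 : Module.End ℝ (SymMat n)) = Pmap σ
    from by apply LinearMap.ext; intro v; simp] at h0
  exact h0

end
end

section
/- Let n ≥ 1, p > (n−1)/2 and σ ∈ E₊, and let I_p(σ) be the endomorphism of E given by I_p(σ) = (1/(2(2p+3)))((2p+1)P(σ⁻¹) − σ⁻¹⊗σ⁻¹). Then I_p(σ) is invertible and its inverse is I_p(σ)⁻¹ = (2(2p+3)/(2p+1)) · (P(σ) + (1/(2p+1−n))·σ⊗σ). -/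
open MeasureTheory Matrix Real

noncomputable section

theorem key1test (n : ℕ) (p c : ℝ) (σ : SymMat n) (hdet : IsUnit (σ : Mat n).det)
    (hc : c * (2*p+1-(n:ℝ)) = 1) :
    ((2*p+1) • Pmap (symInv σ) - tensMap (symInv σ)) * (Pmap σ + c • tensMap σ)
      = (2*p+1) • (1 : Module.End ℝ (SymMat n)) := by
  have hinv : (σ : Mat n)⁻¹ * σ = 1 := Matrix.nonsing_inv_mul _ hdet
  have hinv' : (σ : Mat n) * (σ : Mat n)⁻¹ = 1 := Matrix.mul_nonsing_inv _ hdet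
  apply LinearMap.ext; intro v
  apply Subtype.ext
  simp only [Pmap, tensMap, symInv, Module.End.mul_apply, LinearMap.add_apply,
    LinearMap.smul_apply, LinearMap.sub_apply, Module.End.one_apply, LinearMap.coe_mk,
    AddHom.coe_mk, Submodule.coe_add, SetLike.val_smul, AddSubgroupClass.coe_sub,
    Matrix.mul_add, Matrix.add_mul, Matrix.mul_smul, Matrix.smul_mul, smul_smul,
    Matrix.trace_add, Matrix.trace_smul]
  simp only [Matrix.mul_assoc, Matrix.nonsing_inv_mul_cancel_left _ _ hdet, hinv',
    Matrix.mul_one, hinv, Matrix.one_mul, Matrix.trace_one, Fintype.card_fin, smul_eq_mul]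
  rw [Matrix.trace_mul_comm]
  obtain ⟨t, ht⟩ : ∃ t, ((v : Mat n) * (σ : Mat n)).trace = t := ⟨_, rfl⟩
  rw [ht]
  match_scalars
  · ring
  · linear_combination t * hc

theorem key2test (n : ℕ) (p c : ℝ) (σ : SymMat n) (hdet : IsUnit (σ : Mat n).det)
    (hc : c * (2*p+1-(n:ℝ)) = 1) :
    (Pmap σ + c • tensMap σ) * ((2*p+1) • Pmap (symInv σ) - tensMap (symInv σ))
      = (2*p+1) • (1 : Module.End ℝ (SymMat n)) := by
  have hinv : (σ : Mat n)⁻¹ * σ = 1 := Matrix.nonsing_inv_mul _ hdet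
  have hinv' : (σ : Mat n) * (σ : Mat n)⁻¹ = 1 := Matrix.mul_nonsing_inv _ hdet
  apply LinearMap.ext; intro v
  apply Subtype.ext
  simp only [Pmap, tensMap, symInv, Module.End.mul_apply, LinearMap.add_apply,
    LinearMap.smul_apply, LinearMap.sub_apply, Module.End.one_apply, LinearMap.coe_mk,
    AddHom.coe_mk, Submodule.coe_add, SetLike.val_smul, AddSubgroupClass.coe_sub,
    Matrix.mul_add, Matrix.add_mul, Matrix.mul_smul, Matrix.smul_mul, smul_smul,
    Matrix.mul_sub, Matrix.sub_mul, Matrix.trace_sub, Matrix.trace_add, Matrix.trace_smul]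
  simp only [Matrix.mul_assoc, Matrix.nonsing_inv_mul_cancel_left _ _ hdet, hinv',
    Matrix.mul_one, hinv, Matrix.one_mul, Matrix.trace_one, Fintype.card_fin, smul_eq_mul,
    Matrix.mul_nonsing_inv_cancel_left _ _ hdet]
  rw [Matrix.trace_mul_comm ((σ:Mat n))⁻¹ (v : Mat n)]
  obtain ⟨t, ht⟩ : ∃ t, ((v : Mat n) * ((σ : Mat n))⁻¹).trace = t := ⟨_, rfl⟩
  rw [ht]
  match_scalars
  · ring
  · linear_combination t * hc

/-- Proposition 4.1: `I_p(σ)` is invertible with inverse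
`I_p(σ)⁻¹ = (2(2p+3)/(2p+1)) (P(σ) + (2p+1-n)⁻¹ σ ⊗ σ)`. -/
theorem stmt_14 (n : ℕ) (hn : 1 ≤ n) (p : ℝ) (hp : p > ((n : ℝ) - 1) / 2)
    (σ : SymMat n) (hσ : (σ : Mat n).PosDef) :
    IsUnit ((2 * (2 * p + 3))⁻¹ •
        ((2 * p + 1) • Pmap (symInv σ) - tensMap (symInv σ)) : Module.End ℝ (SymMat n)) ∧
      ((2 * (2 * p + 3))⁻¹ • ((2 * p + 1) • Pmap (symInv σ) - tensMap (symInv σ))) *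
          ((2 * (2 * p + 3) / (2 * p + 1)) •
            (Pmap σ + (2 * p + 1 - (n : ℝ))⁻¹ • tensMap σ)) = 1 ∧
        ((2 * (2 * p + 3) / (2 * p + 1)) •
            (Pmap σ + (2 * p + 1 - (n : ℝ))⁻¹ • tensMap σ)) *
          ((2 * (2 * p + 3))⁻¹ • ((2 * p + 1) • Pmap (symInv σ) - tensMap (symInv σ))) = 1 := by
  have hn' : (1:ℝ) ≤ (n:ℝ) := by exact_mod_cast hn
  have h2p1 : (0:ℝ) < 2*p+1 := by nlinarith
  have h2p3 : (0:ℝ) < 2*p+3 := by nlinarith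
  have hcn : (0:ℝ) < 2*p+1-(n:ℝ) := by nlinarith
  have hc : (2*p+1-(n:ℝ))⁻¹ * (2*p+1-(n:ℝ)) = 1 := inv_mul_cancel₀ hcn.ne'
  have hdet : IsUnit (σ : Mat n).det := isUnit_iff_ne_zero.mpr hσ.det_pos.ne'
  have k1 := key1test n p _ σ hdet hc
  have k2 := key2test n p _ σ hdet hc
  have hs : (2 * (2 * p + 3))⁻¹ * (2 * (2 * p + 3) / (2 * p + 1)) * (2*p+1) = 1 := by
    field_simp
  have e1 : ((2 * (2 * p + 3))⁻¹ • ((2 * p + 1) • Pmap (symInv σ) - tensMap (symInv σ))) *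
          ((2 * (2 * p + 3) / (2 * p + 1)) •
            (Pmap σ + (2 * p + 1 - (n : ℝ))⁻¹ • tensMap σ)) = 1 := by
    rw [smul_mul_smul_comm, k1, smul_smul, hs, one_smul]
  have e2 : ((2 * (2 * p + 3) / (2 * p + 1)) •
            (Pmap σ + (2 * p + 1 - (n : ℝ))⁻¹ • tensMap σ)) *
          ((2 * (2 * p + 3))⁻¹ • ((2 * p + 1) • Pmap (symInv σ) - tensMap (symInv σ))) = 1 := by
    rw [smul_mul_smul_comm, k2, smul_smul]
    rw [show (2 * (2 * p + 3) / (2 * p + 1)) * (2 * (2 * p + 3))⁻¹ * (2*p+1)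
        = (2 * (2 * p + 3))⁻¹ * (2 * (2 * p + 3) / (2 * p + 1)) * (2*p+1) by ring, hs, one_smul]
  exact ⟨⟨⟨_, _, e1, e2⟩, rfl⟩, e1, e2⟩

end
end

section
/- Let n ≥ 1, p₁ > (n+3)/2 and σ₁ ∈ E₊, and set A₁ = p₁ − (n+1)/2 (so A₁ > 1). Then for every u₀ in the boundary of the cone E₊ (i.e. u₀ symmetric positive semidefinite and singular), the function u ↦ (−σ₁⁻¹ + A₁ u⁻¹) · e^{−tr(σ₁⁻¹u)} (det u)^{A₁}, defined on E₊ and valued in E, tends to 0 (in Frobenius norm) as u → u₀ within E₊. -/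
open MeasureTheory Matrix Real

noncomputable section

/-- The matrix-valued integrand `(-σ₁⁻¹ + A₁ u⁻¹) e^{-tr(σ₁⁻¹ u)} (det u)^{A₁}`,
with `A₁ = p₁ - (n+1)/2`. -/
def bTerm (n : ℕ) (p₁ : ℝ) (σ₁ u : Mat n) : Mat n :=
  (Real.exp (-(σ₁⁻¹ * u).trace) * u.det ^ (p₁ - ((n : ℝ) + 1) / 2)) •
    (-σ₁⁻¹ + (p₁ - ((n : ℝ) + 1) / 2) • u⁻¹)

/-- The boundary vanishing needed for the Stokes argument: as `u` tends to a boundary point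
`u₀` of the cone within `E₊`, the `E`-valued function
`u ↦ (-σ₁⁻¹ + A₁ u⁻¹) e^{-tr(σ₁⁻¹ u)} (det u)^{A₁}` tends to `0` in Frobenius norm
`‖A‖ = (tr (Aᵀ A))^{1/2}`. -/
theorem stmt_18 (n : ℕ) (hn : 1 ≤ n) (p₁ : ℝ) (hp₁ : p₁ > ((n : ℝ) + 3) / 2)
    (σ₁ : Mat n) (hσ₁ : σ₁.PosDef) (u₀ : Mat n) (h₀ : u₀.PosSemidef) (hdet : u₀.det = 0) :
    Filter.Tendsto
      (fun u : Mat n => Real.sqrt (((bTerm n p₁ σ₁ u)ᵀ * bTerm n p₁ σ₁ u).trace))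
      (nhdsWithin u₀ {u : Mat n | u.PosDef}) (nhds 0) := by
  set A₁ : ℝ := p₁ - ((n : ℝ) + 1) / 2 with hA₁
  have hA : 1 < A₁ := by
    rw [hA₁]; linarith
  set L := nhdsWithin u₀ {u : Mat n | u.PosDef} with hL
  -- det tends to 0 within positivity
  have hpos : ∀ᶠ u in L, Matrix.PosDef u := by
    rw [hL]; exact self_mem_nhdsWithin
  have hdetT : Filter.Tendsto (fun u : Mat n => u.det) L (nhdsWithin 0 (Set.Ioi 0)) := by
    rw [tendsto_nhdsWithin_iff]
    constructor
    · have := ((Continuous.matrix_det (continuous_id : Continuous fun u : Mat n => u)).continuousAt (x := u₀))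
      simpa [hdet] using this.tendsto.mono_left nhdsWithin_le_nhds
    · filter_upwards [hpos] with u hu
      exact hu.det_pos
  have hrpow : ∀ c : ℝ, 0 < c →
      Filter.Tendsto (fun u : Mat n => u.det ^ c) L (nhds 0) := by
    intro c hc
    have hcont : Filter.Tendsto (fun x : ℝ => x ^ c) (nhdsWithin 0 (Set.Ioi 0)) (nhds 0) := by
      have : ContinuousAt (fun x : ℝ => x ^ c) 0 :=
        Real.continuousAt_rpow_const 0 c (Or.inr hc.le)
      have h0 : (0 : ℝ) ^ c = 0 := Real.zero_rpow hc.ne'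
      simpa [h0] using this.tendsto.mono_left nhdsWithin_le_nhds
    exact hcont.comp hdetT
  -- the simplified form
  have heq : ∀ u : Mat n, u.PosDef →
      bTerm n p₁ σ₁ u =
        Real.exp (-(σ₁⁻¹ * u).trace) •
          ((u.det ^ A₁) • (-σ₁⁻¹) + (A₁ * u.det ^ (A₁ - 1)) • u.adjugate) := by
    intro u hu
    have hd : u.det ≠ 0 := hu.det_pos.ne'
    have hinv : u⁻¹ = (u.det)⁻¹ • u.adjugate := by
      rw [Matrix.inv_def, Ring.inverse_eq_inv]
    have hpow : u.det ^ A₁ * (u.det)⁻¹ = u.det ^ (A₁ - 1) := by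
      rw [Real.rpow_sub_one hd]
      ring
    rw [bTerm, hinv, ← hA₁]
    simp only [smul_add, smul_smul]
    congr 1
    congr 1
    rw [← hpow]; ring
  have heq' : (fun u : Mat n => bTerm n p₁ σ₁ u) =ᶠ[L]
      (fun u => Real.exp (-(σ₁⁻¹ * u).trace) •
          ((u.det ^ A₁) • (-σ₁⁻¹) + (A₁ * u.det ^ (A₁ - 1)) • u.adjugate)) := by
    filter_upwards [hpos] with u hu using heq u hu
  -- the simplified form tends to 0
  have hexp : Filter.Tendsto (fun u : Mat n => Real.exp (-(σ₁⁻¹ * u).trace)) L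
      (nhds (Real.exp (-(σ₁⁻¹ * u₀).trace))) := by
    have : Continuous fun u : Mat n => Real.exp (-(σ₁⁻¹ * u).trace) := by
      apply Real.continuous_exp.comp
      exact (((continuous_const.matrix_mul continuous_id).matrix_trace)).neg
    exact this.continuousAt.tendsto.mono_left nhdsWithin_le_nhds
  have hadj : Filter.Tendsto (fun u : Mat n => u.adjugate) L (nhds u₀.adjugate) :=
    (Continuous.matrix_adjugate continuous_id).continuousAt.tendsto.mono_left
      nhdsWithin_le_nhds
  have h1 : Filter.Tendsto (fun u : Mat n => (u.det ^ A₁) • (-σ₁⁻¹ : Mat n)) L (nhds 0) := by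
    simpa using (hrpow A₁ (by linarith)).smul (tendsto_const_nhds (x := (-σ₁⁻¹ : Mat n)))
  have h2 : Filter.Tendsto (fun u : Mat n => (A₁ * u.det ^ (A₁ - 1)) • u.adjugate) L
      (nhds 0) := by
    have := ((hrpow (A₁ - 1) (by linarith)).const_mul A₁).smul hadj
    simpa using this
  have hmain : Filter.Tendsto (fun u : Mat n => bTerm n p₁ σ₁ u) L (nhds 0) := by
    refine Filter.Tendsto.congr' heq'.symm ?_
    have := hexp.smul (h1.add h2)
    simpa using this
  -- compose with the continuous norm-like function
  have hcont : Continuous fun A : Mat n => Real.sqrt ((Aᵀ * A).trace) :=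
    Real.continuous_sqrt.comp ((continuous_id.matrix_transpose.matrix_mul
      continuous_id).matrix_trace)
  have := (hcont.continuousAt (x := (0 : Mat n))).tendsto.comp hmain
  simpa [Function.comp_def] using this

end
end
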